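/- Let w : [−τ, 0] → ℝ be continuous and nonnegative, and let h : ℝ → ℝ be nonnegative, continuous on [−τ, ∞), differentiable on [0, ∞), satisfy h′(t) = γ(t)·h(t) + α(t)·h(t−τ)^p + β(t) for all t ≥ 0 and h(t) = w(t) for t ∈ [−τ, 0]. Set h_τ := [w(0) + ∫_0^τ (α(ξ)·ν(ξ)·w(ξ−τ)^p + β(ξ)·ν(ξ)) dξ]/ν(τ). Suppose there is a constant ω > 0 such that (i) β(t)·ν(t)^p ≤ ω^p·α(t)·σ(t)^p for all t ≥ τ, and (ii) the improper integral I := ∫_τ^∞ α(ξ)·σ(ξ)^p·ν(ξ)^{1−p} dξ converges and (h_τ·ν(τ) + ω)^{1−p} > (p−1)·I. Then for all t ≥ τ, h(t) ≤ [ ( (h_τ·ν(τ) + ω)^{1−p} − (p−1)·∫_τ^t α(ξ)·σ(ξ)^p·ν(ξ)^{1−p} dξ )^{−1/(p−1)} − ω ] / ν(t). -/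

import Mathlib

open Real MeasureTheory Set Filter

/-- `ν(t) = exp(−∫₀ᵗ γ(ξ) dξ)`. -/
noncomputable def nu (γ : ℝ → ℝ) (t : ℝ) : ℝ := Real.exp (-∫ ξ in (0:ℝ)..t, γ ξ)

/-- `σ(t) = exp(−∫_{t−τ}^t γ(ξ) dξ)`. -/
noncomputable def sig (γ : ℝ → ℝ) (τ t : ℝ) : ℝ :=
  Real.exp (-∫ ξ in (t - τ)..t, γ ξ)

lemma nu_pos (γ : ℝ → ℝ) (t : ℝ) : 0 < nu γ t := Real.exp_pos _

lemma sig_pos (γ : ℝ → ℝ) (τ t : ℝ) : 0 < sig γ τ t := Real.exp_pos _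

lemma hasDerivAt_nu {γ : ℝ → ℝ} (hγc : Continuous γ) (t : ℝ) :
    HasDerivAt (nu γ) (-γ t * nu γ t) t := by
  have hI : HasDerivAt (fun s => ∫ ξ in (0:ℝ)..s, γ ξ) (γ t) t :=
    intervalIntegral.integral_hasDerivAt_right (hγc.intervalIntegrable _ _)
      (hγc.stronglyMeasurable.stronglyMeasurableAtFilter) hγc.continuousAt
  have := (hI.neg).exp
  show HasDerivAt (fun s => Real.exp (-∫ ξ in (0:ℝ)..s, γ ξ)) (-γ t * nu γ t) t
  simpa [nu, mul_comm] using this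

lemma continuous_nu {γ : ℝ → ℝ} (hγc : Continuous γ) : Continuous (nu γ) :=
  continuous_iff_continuousAt.2 fun t => (hasDerivAt_nu hγc t).continuousAt

lemma sig_eq {γ : ℝ → ℝ} (hγc : Continuous γ) (τ t : ℝ) :
    sig γ τ t = nu γ t / nu γ (t - τ) := by
  have h1 : (∫ ξ in (0:ℝ)..t, γ ξ) - ∫ ξ in (0:ℝ)..(t - τ), γ ξ
      = ∫ ξ in (t - τ)..t, γ ξ :=
    intervalIntegral.integral_interval_sub_left (hγc.intervalIntegrable _ _)
      (hγc.intervalIntegrable _ _)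
  rw [sig, nu, nu, ← Real.exp_sub, ← h1]
  ring_nf

lemma add_rpow_aux {a b p : ℝ} (ha : 0 ≤ a) (hb : 0 ≤ b) (hp : 1 ≤ p) :
    a ^ p + b ^ p ≤ (a + b) ^ p := by
  have hp1 : (0:ℝ) ≤ p - 1 := by linarith
  have hab : (0:ℝ) ≤ a + b := by linarith
  have hpne : (1:ℝ) + (p - 1) ≠ 0 := by intro h; linarith
  have hA : a ^ p ≤ a * (a + b) ^ (p - 1) := by
    calc a ^ p = a ^ ((1:ℝ) + (p - 1)) := by ring_nf
    _ = a ^ (1:ℝ) * a ^ (p - 1) := Real.rpow_add' ha hpne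
    _ = a * a ^ (p - 1) := by rw [Real.rpow_one]
    _ ≤ a * (a + b) ^ (p - 1) := by
        exact mul_le_mul_of_nonneg_left
          (Real.rpow_le_rpow ha (by linarith) hp1) ha
  have hB : b ^ p ≤ b * (a + b) ^ (p - 1) := by
    calc b ^ p = b ^ ((1:ℝ) + (p - 1)) := by ring_nf
    _ = b ^ (1:ℝ) * b ^ (p - 1) := Real.rpow_add' hb hpne
    _ = b * b ^ (p - 1) := by rw [Real.rpow_one]
    _ ≤ b * (a + b) ^ (p - 1) := by
        exact mul_le_mul_of_nonneg_left
          (Real.rpow_le_rpow hb (by linarith) hp1) hb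
  calc a ^ p + b ^ p ≤ (a + b) * (a + b) ^ (p - 1) := by linarith [hA, hB]
  _ = (a + b) ^ (1:ℝ) * (a + b) ^ (p - 1) := by rw [Real.rpow_one]
  _ = (a + b) ^ ((1:ℝ) + (p - 1)) := (Real.rpow_add' hab hpne).symm
  _ = (a + b) ^ p := by ring_nf

set_option maxHeartbeats 1000000 in
/-- Lemma 2.3: global bound for the solution `h` of the delay equation under
conditions (15)–(16). -/
theorem stmt_6
    (τ p : ℝ) (hτ : 0 < τ) (hp : 1 < p)
    (γ α β : ℝ → ℝ)
    (hγc : Continuous γ) (hαc : Continuous α) (hβc : Continuous β)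
    (hα : ∀ t, 0 ≤ α t) (hβ : ∀ t, 0 ≤ β t)
    (w : ℝ → ℝ) (hwc : ContinuousOn w (Icc (-τ) 0)) (hw0 : ∀ t ∈ Icc (-τ) 0, 0 ≤ w t)
    (h h' : ℝ → ℝ)
    (hh0 : ∀ t, -τ ≤ t → 0 ≤ h t)
    (hhc : ContinuousOn h (Ici (-τ)))
    (hhd : ∀ t, 0 ≤ t → HasDerivWithinAt h (h' t) (Ici (0:ℝ)) t)
    (hheq : ∀ t, 0 ≤ t → h' t = γ t * h t + α t * h (t - τ) ^ p + β t)
    (hinit : ∀ t, -τ ≤ t → t ≤ 0 → h t = w t)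
    (hτv : ℝ)
    (hτvdef : hτv = (w 0 + ∫ ξ in (0:ℝ)..τ,
        (α ξ * nu γ ξ * w (ξ - τ) ^ p + β ξ * nu γ ξ)) / nu γ τ)
    (ω : ℝ) (hω : 0 < ω)
    (hcond1 : ∀ t, τ ≤ t → β t * nu γ t ^ p ≤ ω ^ p * (α t * sig γ τ t ^ p))
    (hint : IntegrableOn (fun ξ => α ξ * sig γ τ ξ ^ p * nu γ ξ ^ (1 - p)) (Ici τ))
    (hcond2 : (p - 1) * ∫ ξ in Ici τ, α ξ * sig γ τ ξ ^ p * nu γ ξ ^ (1 - p)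
        < (hτv * nu γ τ + ω) ^ (1 - p)) :
    ∀ t, τ ≤ t →
      h t ≤ (((hτv * nu γ τ + ω) ^ (1 - p)
          - (p - 1) * ∫ ξ in τ..t, α ξ * sig γ τ ξ ^ p * nu γ ξ ^ (1 - p))
            ^ (-(1 / (p - 1))) - ω) / nu γ t := by
  have hνpos : ∀ t, 0 < nu γ t := nu_pos γ
  have hνd : ∀ t, HasDerivAt (nu γ) (-γ t * nu γ t) t := hasDerivAt_nu hγc
  have hνc : Continuous (nu γ) := continuous_nu hγc
  set u : ℝ → ℝ := fun t => h t * nu γ t with hudef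
  set U : ℝ → ℝ := fun t => (α t * h (t - τ) ^ p + β t) * nu γ t with hUdef
  set g : ℝ → ℝ := fun ξ => α ξ * sig γ τ ξ ^ p * nu γ ξ ^ (1 - p) with hgdef
  have hud : ∀ t, 0 ≤ t → HasDerivWithinAt u (U t) (Ici (0:ℝ)) t := by
    intro t ht
    have := (hhd t ht).mul ((hνd t).hasDerivWithinAt)
    refine HasDerivWithinAt.congr_deriv this ?_
    simp only [hUdef]
    rw [hheq t ht]; ring
  have huc : ContinuousOn u (Ici (-τ)) := hhc.mul hνc.continuousOn
  have hshift : ContinuousOn (fun t => h (t - τ)) (Ici (0:ℝ)) := by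
    apply hhc.comp (Continuous.continuousOn (by continuity))
    intro x hx
    simp only [mem_Ici] at *
    linarith
  have hUc : ContinuousOn U (Ici (0:ℝ)) := by
    apply ContinuousOn.mul _ hνc.continuousOn
    apply ContinuousOn.add _ hβc.continuousOn
    apply hαc.continuousOn.mul
    exact hshift.rpow_const (fun x _ => Or.inr (by linarith))
  have hU0 : ∀ t, 0 ≤ t → 0 ≤ U t := by
    intro t ht
    apply mul_nonneg _ (hνpos t).le
    have := Real.rpow_nonneg (hh0 (t - τ) (by linarith)) p
    have := hα t; have := hβ t; positivity
  have hFTC : ∀ a b, 0 ≤ a → a ≤ b → ∫ ξ in a..b, U ξ = u b - u a := by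
    intro a b ha hab
    apply intervalIntegral.integral_eq_sub_of_hasDeriv_right_of_le hab
    · exact huc.mono fun x hx => by simp only [mem_Icc, mem_Ici] at *; linarith [hx.1]
    · intro x hx
      exact (((hud x (by linarith [hx.1])).hasDerivAt
        (Ici_mem_nhds (by linarith [hx.1]))).hasDerivWithinAt)
    · apply ContinuousOn.intervalIntegrable
      apply hUc.mono
      rw [uIcc_of_le hab]
      exact fun x hx => le_trans ha hx.1
  have humono : ∀ a b, 0 ≤ a → a ≤ b → u a ≤ u b := by
    intro a b ha hab
    have h1 := hFTC a b ha hab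
    have h2 : 0 ≤ ∫ ξ in a..b, U ξ :=
      intervalIntegral.integral_nonneg hab (fun x hx => hU0 x (le_trans ha hx.1))
    linarith
  have hu0 : ∀ t, -τ ≤ t → 0 ≤ u t := fun t ht => mul_nonneg (hh0 t ht) (hνpos t).le
  -- value at τ
  have huτ : u τ = hτv * nu γ τ := by
    have h1 := hFTC 0 τ le_rfl hτ.le
    have hu00 : u 0 = w 0 := by
      have : nu γ 0 = 1 := by simp [nu]
      simp [hudef, this, hinit 0 (by linarith) le_rfl]
    have hcong : ∫ ξ in (0:ℝ)..τ, U ξ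
        = ∫ ξ in (0:ℝ)..τ, (α ξ * nu γ ξ * w (ξ - τ) ^ p + β ξ * nu γ ξ) := by
      apply intervalIntegral.integral_congr
      intro ξ hξ
      rw [uIcc_of_le hτ.le] at hξ
      rw [hUdef]
      simp only
      rw [hinit (ξ - τ) (by linarith [hξ.1]) (by linarith [hξ.2])]
      ring
    rw [hτvdef, div_mul_cancel₀ _ (hνpos τ).ne']
    rw [hcong, hu00] at h1
    linarith
  -- continuity and nonnegativity of g
  have hσc : Continuous (sig γ τ) := by
    have : sig γ τ = fun t => nu γ t / nu γ (t - τ) := funext (sig_eq hγc τ)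
    rw [this]
    exact hνc.div (hνc.comp (by continuity)) (fun t => (hνpos _).ne')
  have hgc : Continuous g := by
    apply Continuous.mul
    · exact hαc.mul (hσc.rpow_const (fun x => Or.inl (sig_pos γ τ x).ne'))
    · exact hνc.rpow_const (fun x => Or.inl (hνpos x).ne')
  have hgnn : ∀ ξ, 0 ≤ g ξ := by
    intro ξ
    have h1 := Real.rpow_nonneg (sig_pos γ τ ξ).le p
    have h2 := Real.rpow_nonneg (hνpos ξ).le (1 - p)
    exact mul_nonneg (mul_nonneg (hα ξ) h1) h2
  -- key differential inequality
  have hkey : ∀ t, τ ≤ t → U t ≤ g t * (u t + ω) ^ p := by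
    intro t ht
    have ht0 : (0:ℝ) ≤ t - τ := by linarith
    have hν' := hνpos (t - τ)
    have hνt := hνpos t
    have hht : h (t - τ) = u (t - τ) / nu γ (t - τ) := by
      rw [hudef]; field_simp
    have hid : sig γ τ t ^ p * nu γ t ^ (1 - p) = nu γ t / nu γ (t - τ) ^ p := by
      rw [sig_eq hγc τ t, Real.div_rpow (hνt.le) (hν'.le),
        div_mul_eq_mul_div, ← Real.rpow_add hνt]
      norm_num
    have hA : α t * h (t - τ) ^ p * nu γ t ≤ g t * u t ^ p := by
      have e1 : h (t - τ) ^ p = u (t - τ) ^ p / nu γ (t - τ) ^ p := by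
        rw [hht, Real.div_rpow (hu0 _ (by linarith)) hν'.le]
      have hgt : g t = α t * (nu γ t / nu γ (t - τ) ^ p) := by
        rw [hgdef]; simp only; rw [mul_assoc, hid]
      have e2 : α t * h (t - τ) ^ p * nu γ t = g t * u (t - τ) ^ p := by
        rw [e1, hgt]
        field_simp
      rw [e2]
      apply mul_le_mul_of_nonneg_left _ (hgnn t)
      exact Real.rpow_le_rpow (hu0 _ (by linarith)) (humono (t - τ) t ht0 (by linarith))
        (by linarith)
    have hB : β t * nu γ t ≤ g t * ω ^ p := by
      have h1 := hcond1 t ht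
      have h2 : (0:ℝ) ≤ nu γ t ^ (1 - p) := Real.rpow_nonneg hνt.le _
      have h3 := mul_le_mul_of_nonneg_right h1 h2
      have e1 : β t * nu γ t ^ p * nu γ t ^ (1 - p) = β t * nu γ t := by
        rw [mul_assoc, ← Real.rpow_add hνt]; norm_num
      have e2 : ω ^ p * (α t * sig γ τ t ^ p) * nu γ t ^ (1 - p) = g t * ω ^ p := by
        rw [hgdef]; ring
      rw [e1, e2] at h3
      exact h3
    have hC : u t ^ p + ω ^ p ≤ (u t + ω) ^ p :=
      add_rpow_aux (hu0 t (by linarith)) hω.le hp.le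
    calc U t = α t * h (t - τ) ^ p * nu γ t + β t * nu γ t := by rw [hUdef]; ring
    _ ≤ g t * u t ^ p + g t * ω ^ p := add_le_add hA hB
    _ = g t * (u t ^ p + ω ^ p) := by ring
    _ ≤ g t * (u t + ω) ^ p := mul_le_mul_of_nonneg_left hC (hgnn t)
  -- the comparison function
  set v : ℝ → ℝ := fun t => u t + ω with hvdef
  have hvpos : ∀ t, -τ ≤ t → 0 < v t := fun t ht => by
    have := hu0 t ht; simp only [hvdef]; linarith
  set F : ℝ → ℝ := fun t => v t ^ (1 - p) with hFdef
  set G : ℝ → ℝ := fun t => F t + (p - 1) * ∫ ξ in τ..t, g ξ with hGdef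
  set G' : ℝ → ℝ := fun t => U t * (1 - p) * v t ^ (1 - p - 1) + (p - 1) * g t with hG'def
  have hvd : ∀ t, τ ≤ t → HasDerivWithinAt v (U t) (Ici τ) t := by
    intro t ht
    exact (((hud t (by linarith)).mono (Ici_subset_Ici.2 hτ.le)).add_const ω)
  have hGd : ∀ t, τ ≤ t → HasDerivWithinAt G (G' t) (Ici τ) t := by
    intro t ht
    apply HasDerivWithinAt.add
    · exact (hvd t ht).rpow_const (Or.inl (hvpos t (by linarith)).ne')
    · have : HasDerivAt (fun s => ∫ ξ in τ..s, g ξ) (g t) t :=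
        intervalIntegral.integral_hasDerivAt_right (hgc.intervalIntegrable _ _)
          (hgc.stronglyMeasurable.stronglyMeasurableAtFilter) hgc.continuousAt
      exact ((this.const_mul (p - 1)).hasDerivWithinAt)
  have hG'0 : ∀ t, τ ≤ t → 0 ≤ G' t := by
    intro t ht
    have hvt := hvpos t (by linarith)
    have hvp : (0:ℝ) < v t ^ (-p) := Real.rpow_pos_of_pos hvt _
    have h1 : U t * v t ^ (-p) ≤ g t := by
      calc U t * v t ^ (-p) ≤ (g t * v t ^ p) * v t ^ (-p) :=
            mul_le_mul_of_nonneg_right (hkey t ht) hvp.le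
      _ = g t * (v t ^ p * v t ^ (-p)) := by ring
      _ = g t := by rw [← Real.rpow_add hvt]; norm_num
    have e : (1:ℝ) - p - 1 = -p := by ring
    rw [hG'def]
    simp only [e]
    nlinarith [h1, hp]
  have hvc : ContinuousOn v (Ici (-τ)) := huc.add continuousOn_const
  have hG'c : ContinuousOn G' (Ici τ) := by
    have hsub : Ici τ ⊆ Ici (0:ℝ) := Ici_subset_Ici.2 hτ.le
    have hsub2 : Ici τ ⊆ Ici (-τ) := Ici_subset_Ici.2 (by linarith)
    apply ContinuousOn.add
    · apply ContinuousOn.mul ((hUc.mono hsub).mul continuousOn_const)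
      exact (hvc.mono hsub2).rpow_const (fun x hx => Or.inl (hvpos x (hsub2 hx)).ne')
    · exact (hgc.continuousOn.const_smul (p-1)).congr (fun x _ => by simp [smul_eq_mul])
  have hGc : ContinuousOn G (Ici τ) := by
    intro x hx
    exact ((hGd x hx).continuousWithinAt)
  have hGmono : ∀ t, τ ≤ t → G τ ≤ G t := by
    intro t ht
    have hFTC2 : ∫ ξ in τ..t, G' ξ = G t - G τ := by
      apply intervalIntegral.integral_eq_sub_of_hasDeriv_right_of_le ht
      · exact hGc.mono (Icc_subset_Ici_self)
      · intro x hx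
        exact ((hGd x hx.1.le).hasDerivAt (Ici_mem_nhds hx.1)).hasDerivWithinAt
      · apply ContinuousOn.intervalIntegrable
        apply hG'c.mono
        rw [uIcc_of_le ht]
        exact Icc_subset_Ici_self
    have h2 : 0 ≤ ∫ ξ in τ..t, G' ξ :=
      intervalIntegral.integral_nonneg ht (fun x hx => hG'0 x hx.1)
    linarith
  -- conclude
  intro t ht
  have hνt := hνpos t
  set Jt := ∫ ξ in τ..t, g ξ with hJdef
  have hC : F τ = (hτv * nu γ τ + ω) ^ (1 - p) := by
    rw [hFdef]; simp only [hvdef]; rw [huτ]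
  have hGτ : G τ = F τ := by simp [hGdef]
  have hgeq : F t ≥ F τ - (p - 1) * Jt := by
    have := hGmono t ht
    rw [hGdef] at this
    simp only [hGτ] at this
    rw [hGdef] at hGτ
    simp only at *
    linarith [this]
  have hJle : Jt ≤ ∫ ξ in Ici τ, g ξ := by
    rw [hJdef, intervalIntegral.integral_of_le ht]
    apply setIntegral_mono_set hint
    · exact Eventually.of_forall hgnn
    · exact HasSubset.Subset.eventuallyLE (fun x hx => le_of_lt hx.1)
  have hCpos : 0 < (hτv * nu γ τ + ω) ^ (1 - p) - (p - 1) * Jt := by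
    have h1 : (p - 1) * Jt ≤ (p - 1) * ∫ ξ in Ici τ, g ξ :=
      mul_le_mul_of_nonneg_left hJle (by linarith)
    have := hcond2
    rw [hgdef] at *
    linarith
  have hvge : (hτv * nu γ τ + ω) ^ (1 - p) - (p - 1) * Jt ≤ v t ^ (1 - p) := by
    rw [← hC]; linarith [hgeq]
  have hexp : -(1 / (p - 1)) ≤ 0 := by
    have h0 : 0 < 1 / (p - 1) := by
      apply one_div_pos.2; linarith
    linarith
  have hfinal : v t ≤ ((hτv * nu γ τ + ω) ^ (1 - p) - (p - 1) * Jt) ^ (-(1 / (p - 1))) := by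
    have h1 := Real.rpow_le_rpow_of_nonpos hCpos hvge hexp
    have h2 : (v t ^ (1 - p)) ^ (-(1 / (p - 1))) = v t := by
      rw [← Real.rpow_mul (hvpos t (by linarith)).le]
      have e : (1 - p) * -(1 / (p - 1)) = 1 := by
        have hne : p - 1 ≠ 0 := by linarith
        field_simp
        ring
      rw [e, Real.rpow_one]
    rw [h2] at h1
    exact h1
  rw [le_div_iff₀ hνt]
  have hu : h t * nu γ t = u t := by rw [hudef]
  rw [hu]
  have := hfinal
  rw [hvdef] at this
  simp only at this
  linarith
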